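/- arXiv:2011.08118 — 2 statements merged into one kernel-verified Lean document; each statement's English description precedes it below -/
import Mathlib

section
/- The tower decomposition into biprimes is unique: if two lists of biprime numbers (all entries > 1) have equal tower exponentiation values, then the lists are equal. -/
def Biprime (n : ℕ) : Prop := 1 < n ∧ ¬ ∃ a b : ℕ, 1 < a ∧ 1 < b ∧ a ^ b = n

def tower : List ℕ → ℕ
  | [] => 1
  | a :: l => a ^ tower l

lemma exists_pow_of_dvd_factorization {a k : ℕ} (ha : a ≠ 0)
    (h : ∀ p, k ∣ a.factorization p) : ∃ c, c ^ k = a := by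
  refine ⟨a.factorization.prod fun p e => p ^ (e / k), ?_⟩
  rw [Finsupp.prod, ← Finset.prod_pow]
  have : ∀ p ∈ a.factorization.support, (p ^ (a.factorization p / k)) ^ k
      = p ^ a.factorization p := by
    intro p _
    rw [← pow_mul, Nat.div_mul_cancel (h p)]
  rw [Finset.prod_congr rfl this]
  exact Nat.factorization_prod_pow_eq_self ha

lemma biprime_exponent_one {a y : ℕ} (ha : Biprime a) (hd : ∀ p, y ∣ a.factorization p)
    (hy : 0 < y) : y = 1 := by
  have ha1 := ha.1
  by_contra hne
  have hy1 : 1 < y := lt_of_le_of_ne hy (fun h => hne h.symm)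
  obtain ⟨c, hc⟩ := exists_pow_of_dvd_factorization (by omega : a ≠ 0) hd
  have hc1 : 1 < c := by
    by_contra hcle
    push_neg at hcle
    have : c ^ y ≤ 1 ^ y := Nat.pow_le_pow_left hcle y
    simp at this
    omega
  exact ha.2 ⟨c, y, hc1, hy1, hc⟩

lemma biprime_key {a b x y : ℕ} (ha : Biprime a) (hb : Biprime b)
    (hx : 0 < x) (hy : 0 < y) (h : a ^ x = b ^ y) : a = b ∧ x = y := by
  have ha0 : a ≠ 0 := by have := ha.1; omega
  have hb0 : b ≠ 0 := by have := hb.1; omega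
  have hfac : ∀ p, x * a.factorization p = y * b.factorization p := by
    intro p
    have := congrArg (fun n => Nat.factorization n p) h
    simpa [Nat.factorization_pow] using this
  set g := Nat.gcd x y with hg
  have hg0 : 0 < g := Nat.gcd_pos_of_pos_left y hx
  have hx' : g * (x / g) = x := Nat.mul_div_cancel' (Nat.gcd_dvd_left x y)
  have hy' : g * (y / g) = y := Nat.mul_div_cancel' (Nat.gcd_dvd_right x y)
  have hcop : Nat.Coprime (x / g) (y / g) := Nat.coprime_div_gcd_div_gcd hg0
  have hfac' : ∀ p, (x / g) * a.factorization p = (y / g) * b.factorization p := by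
    intro p
    have := hfac p
    rw [← hx', ← hy', mul_assoc, mul_assoc] at this
    exact Nat.eq_of_mul_eq_mul_left hg0 this
  have hdvd : ∀ p, (y / g) ∣ a.factorization p := by
    intro p
    have : (y / g) ∣ (x / g) * a.factorization p := ⟨b.factorization p, hfac' p⟩
    exact (Nat.Coprime.dvd_of_dvd_mul_left hcop.symm this)
  have hdvd' : ∀ p, (x / g) ∣ b.factorization p := by
    intro p
    have : (x / g) ∣ (y / g) * b.factorization p := ⟨a.factorization p, (hfac' p).symm⟩
    exact (Nat.Coprime.dvd_of_dvd_mul_left hcop this)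
  have hyg1 : y / g = 1 := biprime_exponent_one ha hdvd (Nat.div_pos (Nat.le_of_dvd hy (Nat.gcd_dvd_right x y)) hg0)
  have hxg1 : x / g = 1 := biprime_exponent_one hb hdvd' (Nat.div_pos (Nat.le_of_dvd hx (Nat.gcd_dvd_left x y)) hg0)
  have hxy : x = y := by
    rw [← hx', ← hy', hyg1, hxg1]
  refine ⟨?_, hxy⟩
  rw [hxy] at h
  exact Nat.pow_left_injective hy.ne' h

lemma tower_pos (l : List ℕ) (h : ∀ a ∈ l, Biprime a) : 0 < tower l := by
  induction l with
  | nil => simp [tower]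
  | cons a t ih =>
    have := (h a (by simp)).1
    exact pow_pos (by omega) _

lemma tower_gt_one (l : List ℕ) (hl : l ≠ []) (h : ∀ a ∈ l, Biprime a) : 1 < tower l := by
  cases l with
  | nil => exact absurd rfl hl
  | cons a t =>
    have ha := (h a (by simp)).1
    have ht : 0 < tower t := tower_pos t (fun b hb => h b (by simp [hb]))
    calc 1 < a := ha
    _ = a ^ 1 := (pow_one a).symm
    _ ≤ a ^ tower t := Nat.pow_le_pow_right (by omega) ht
    _ = tower (a :: t) := rfl

theorem stmt3 (l₁ l₂ : List ℕ) (h₁ : l₁ ≠ []) (h₂ : l₂ ≠ [])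
    (hb₁ : ∀ a ∈ l₁, Biprime a) (hb₂ : ∀ a ∈ l₂, Biprime a)
    (heq : tower l₁ = tower l₂) : l₁ = l₂ := by
  induction l₁ generalizing l₂ with
  | nil => exact absurd rfl h₁
  | cons a t ih =>
    cases l₂ with
    | nil => exact absurd rfl h₂
    | cons b s =>
      have ha := hb₁ a (by simp)
      have hb := hb₂ b (by simp)
      have htb : ∀ c ∈ t, Biprime c := fun c hc => hb₁ c (by simp [hc])
      have hsb : ∀ c ∈ s, Biprime c := fun c hc => hb₂ c (by simp [hc])
      have key := biprime_key ha hb (tower_pos t htb) (tower_pos s hsb) heq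
      obtain ⟨hab, hts⟩ := key
      subst hab
      congr 1
      rcases List.eq_nil_or_concat t with ht | _
      · rcases List.eq_nil_or_concat s with hs | _
        · rw [ht, hs]
        · have : (1:ℕ) < tower s := tower_gt_one s (by rintro rfl; simp_all) hsb
          rw [ht] at hts
          simp [tower] at hts
          omega
      · have htne : t ≠ [] := by rintro rfl; simp_all
        have hsne : s ≠ [] := by
          rintro rfl
          have : (1:ℕ) < tower t := tower_gt_one t htne htb
          simp [tower] at hts
          omega
        exact ih s htne hsne htb hsb hts
end

section
/- If a_1, ..., a_s and b_1, ..., b_t are biprimes (all > 1) with a_1 ^ (a_2 ^ (⋯ ^ a_s)) = b_1 ^ (b_2 ^ (⋯ ^ b_t)), then a_1 = b_1. -/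
lemma tower_ne_zero (l : List ℕ) (h : ∀ x ∈ l, Biprime x) : tower l ≠ 0 := by
  induction l with
  | nil => simp [tower]
  | cons a l ih =>
    have ha := (h a (by simp)).1
    simp only [tower]
    exact pow_ne_zero _ (by omega)

lemma key (a b m n : ℕ) (hba : Biprime a) (hbb : Biprime b)
    (hm : m ≠ 0) (hn : n ≠ 0) (h : a ^ m = b ^ n) : a = b := by
  set g := Nat.gcd m n with hg
  have hg0 : g ≠ 0 := Nat.gcd_ne_zero_left hm
  set m' := m / g with hm'd
  set n' := n / g with hn'd
  have hm' : m = g * m' := (Nat.mul_div_cancel' (Nat.gcd_dvd_left m n)).symm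
  have hn' : n = g * n' := (Nat.mul_div_cancel' (Nat.gcd_dvd_right m n)).symm
  have hcop : Nat.Coprime m' n' :=
    Nat.coprime_div_gcd_div_gcd (Nat.pos_of_ne_zero hg0)
  clear_value m' n' g
  have hm'0 : m' ≠ 0 := by rintro rfl; simp at hm'; omega
  have hn'0 : n' ≠ 0 := by rintro rfl; simp at hn'; omega
  have h2 : a ^ m' = b ^ n' := by
    have : (a ^ m') ^ g = (b ^ n') ^ g := by
      rw [← pow_mul, ← pow_mul, mul_comm m' g, mul_comm n' g, ← hm', ← hn', h]
    exact Nat.pow_left_injective hg0 this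
  -- cast to ℚ≥0
  have hq : ((a : ℚ≥0)) ^ m' = (b : ℚ≥0) ^ n' := by
    rw [← Nat.cast_pow, ← Nat.cast_pow, h2]
  obtain ⟨c, hca, hcb⟩ := (pow_eq_pow_iff_of_coprime hcop).1 hq
  have hden : c.den = 1 := by
    have : c.den ^ n' = 1 := by
      have : ((c ^ n') : ℚ≥0).den = 1 := by rw [← hca]; simp
      simpa using this
    exact (pow_eq_one_iff.1 this).resolve_right hn'0
  have hc : c = (c.num : ℚ≥0) := by
    conv_lhs => rw [← NNRat.num_div_den c]
    rw [hden]; simp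
  have hA : a = c.num ^ n' := by
    have : (a : ℚ≥0) = ((c.num ^ n' : ℕ) : ℚ≥0) := by
      rw [hca]; nth_rewrite 1 [hc]; push_cast; simp
    exact_mod_cast this
  have hB : b = c.num ^ m' := by
    have : (b : ℚ≥0) = ((c.num ^ m' : ℕ) : ℚ≥0) := by
      rw [hcb]; nth_rewrite 1 [hc]; push_cast; simp
    exact_mod_cast this
  have hd1 : 1 < c.num := by
    by_contra hle
    push_neg at hle
    have h1 := Nat.pow_le_pow_left hle n'
    simp at h1
    have := hba.1
    omega
  have hn1 : n' = 1 := by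
    by_contra hne
    exact hba.2 ⟨c.num, n', hd1, by omega, hA.symm⟩
  have hm1 : m' = 1 := by
    by_contra hne
    exact hbb.2 ⟨c.num, m', hd1, by omega, hB.symm⟩
  rw [hA, hB, hn1, hm1]

theorem stmt11 (a b : ℕ) (la lb : List ℕ)
    (hba : Biprime a) (hbb : Biprime b)
    (ha : ∀ x ∈ la, Biprime x) (hb : ∀ x ∈ lb, Biprime x)
    (heq : tower (a :: la) = tower (b :: lb)) : a = b := by
  exact key a b (tower la) (tower lb) hba hbb (tower_ne_zero la ha) (tower_ne_zero lb hb) heq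
end
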